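/- Let d = 3, D ⊂ R³ bounded, |G(x,y)| ≤ C|x−y|^{−1}, u ∈ L^∞(D), and R ∈ L¹(R³) with R(·)/|·| ∈ L¹(R³). Then the mean function m_ε(x) := ∫_{D²} G(x,y) G(y,z) R((y−z)/ε) u(z) dz dy satisfies ‖m_ε‖²_{L²(D)} ≤ C ε⁴. -/

import Mathlib

open MeasureTheory Bornology Metric Set

local notation "E3" => EuclideanSpace ℝ (Fin 3)

/-- The Riesz kernel `‖w‖⁻¹` is integrable on balls in `ℝ³`. -/
lemma riesz_integrableOn_ball (r : ℝ) :
    IntegrableOn (fun w : E3 => ‖w‖⁻¹) (Metric.ball 0 r) volume := by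
  by_cases hr : 0 < r
  swap
  · rw [Metric.ball_eq_empty.2 (not_lt.1 hr)]; exact integrableOn_empty
  have hmble : Measurable fun w : E3 => ‖w‖⁻¹ := measurable_norm.inv
  have hnn : ∀ w : E3, 0 ≤ ‖w‖⁻¹ := fun w => inv_nonneg.2 (norm_nonneg w)
  refine ⟨hmble.aestronglyMeasurable, ?_⟩
  rw [hasFiniteIntegral_iff_ofReal (ae_of_all _ hnn)]
  rw [lintegral_eq_lintegral_meas_le _ (ae_of_all _ hnn) hmble.aemeasurable]
  have hsplit : Ioi (0 : ℝ) = Ioc 0 r⁻¹ ∪ Ioi r⁻¹ :=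
    (Ioc_union_Ioi_eq_Ioi (inv_nonneg.2 hr.le)).symm
  rw [hsplit, lintegral_union measurableSet_Ioi Ioc_disjoint_Ioi_same]
  have h1 : ∫⁻ t in Ioc (0:ℝ) r⁻¹,
      (volume.restrict (Metric.ball (0:E3) r)) {w | t ≤ ‖w‖⁻¹} < ⊤ := by
    calc (∫⁻ t in Ioc (0:ℝ) r⁻¹,
        (volume.restrict (Metric.ball (0:E3) r)) {w | t ≤ ‖w‖⁻¹})
        ≤ ∫⁻ _ in Ioc (0:ℝ) r⁻¹, volume (Metric.ball (0:E3) r) := by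
          refine lintegral_mono fun t => ?_
          calc (volume.restrict (Metric.ball (0:E3) r)) {w | t ≤ ‖w‖⁻¹}
              ≤ (volume.restrict (Metric.ball (0:E3) r)) univ :=
                measure_mono (subset_univ _)
            _ = volume (Metric.ball (0:E3) r) := by
                rw [Measure.restrict_apply_univ]
      _ = volume (Metric.ball (0:E3) r) * volume (Ioc (0:ℝ) r⁻¹) :=
          setLIntegral_const _ _
      _ < ⊤ := ENNReal.mul_lt_top measure_ball_lt_top
          (by rw [Real.volume_Ioc]; exact ENNReal.ofReal_lt_top)
  have h2 : ∫⁻ t in Ioi r⁻¹,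
      (volume.restrict (Metric.ball (0:E3) r)) {w | t ≤ ‖w‖⁻¹} < ⊤ := by
    have key : ∀ t ∈ Ioi r⁻¹,
        (volume.restrict (Metric.ball (0:E3) r)) {w | t ≤ ‖w‖⁻¹}
          ≤ volume (Metric.ball (0:E3) 1) * ENNReal.ofReal (t ^ (-3 : ℝ)) := by
      intro t ht
      have ht0 : 0 < t := lt_trans (inv_pos.2 hr) ht
      have hsub : {w : E3 | t ≤ ‖w‖⁻¹} ⊆ Metric.closedBall 0 t⁻¹ := by
        intro w hw
        simp only [mem_setOf_eq] at hw
        rcases eq_or_ne w 0 with rfl | hw0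
        · exact Metric.mem_closedBall_self (inv_nonneg.2 ht0.le)
        · have hwpos : 0 < ‖w‖ := norm_pos_iff.2 hw0
          have : (‖w‖⁻¹)⁻¹ ≤ t⁻¹ := inv_anti₀ ht0 hw
          rw [inv_inv] at this
          simpa [Metric.mem_closedBall, dist_eq_norm] using this
      have hms : MeasurableSet {w : E3 | t ≤ ‖w‖⁻¹} :=
        measurableSet_le measurable_const measurable_norm.inv
      calc (volume.restrict (Metric.ball (0:E3) r)) {w | t ≤ ‖w‖⁻¹}
          = volume ({w : E3 | t ≤ ‖w‖⁻¹} ∩ Metric.ball 0 r) := by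
            rw [Measure.restrict_apply hms]
        _ ≤ volume (Metric.closedBall (0:E3) t⁻¹) :=
            measure_mono (inter_subset_left.trans hsub)
        _ = ENNReal.ofReal (t⁻¹ ^ Module.finrank ℝ E3) * volume (Metric.ball (0:E3) 1) :=
            Measure.addHaar_closedBall _ _ (inv_nonneg.2 ht0.le)
        _ = volume (Metric.ball (0:E3) 1) * ENNReal.ofReal (t ^ (-3 : ℝ)) := by
            rw [mul_comm]
            congr 1
            congr 1
            rw [finrank_euclideanSpace_fin]
            rw [show ((-3 : ℝ)) = -(3:ℕ) by norm_num, Real.rpow_neg ht0.le,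
              Real.rpow_natCast]
            rw [inv_pow]
    calc (∫⁻ t in Ioi r⁻¹, (volume.restrict (Metric.ball (0:E3) r)) {w | t ≤ ‖w‖⁻¹})
        ≤ ∫⁻ t in Ioi r⁻¹,
            volume (Metric.ball (0:E3) 1) * ENNReal.ofReal (t ^ (-3 : ℝ)) := by
          refine setLIntegral_mono' measurableSet_Ioi key
      _ = volume (Metric.ball (0:E3) 1) *
            ∫⁻ t in Ioi r⁻¹, ENNReal.ofReal (t ^ (-3 : ℝ)) :=
          lintegral_const_mul' _ _ measure_ball_lt_top.ne
      _ < ⊤ := by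
          refine ENNReal.mul_lt_top measure_ball_lt_top ?_
          have hint : IntegrableOn (fun t : ℝ => t ^ (-3 : ℝ)) (Ioi r⁻¹) :=
            integrableOn_Ioi_rpow_of_lt (by norm_num) (inv_pos.2 hr)
          have := hint.2
          rw [hasFiniteIntegral_iff_ofReal ?hnn] at this
          · exact this
          case hnn =>
            filter_upwards [ae_restrict_mem measurableSet_Ioi] with t ht
            exact Real.rpow_nonneg (le_of_lt (lt_trans (inv_pos.2 hr) ht)) _
  exact ENNReal.add_lt_top.2 ⟨h1, h2⟩

/-- Change of variables for the scaled correlation kernel. -/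
lemma cov_lemma {R : E3 → ℝ}
    (hR' : Integrable (fun w : E3 => ‖w‖⁻¹ * |R w|)) {ε : ℝ} (hε : 0 < ε) (y : E3) :
    Integrable (fun z : E3 => ‖y - z‖⁻¹ * |R (ε⁻¹ • (y - z))|) ∧
      ∫ z : E3, ‖y - z‖⁻¹ * |R (ε⁻¹ • (y - z))|
        = ε ^ 2 * ∫ w : E3, ‖w‖⁻¹ * |R w| := by
  have hεne : ε ≠ 0 := hε.ne'
  set h : E3 → ℝ := fun w => ‖ε • w‖⁻¹ * |R w| with hh_def
  have hh_eq : h = fun w => ε⁻¹ * (‖w‖⁻¹ * |R w|) := by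
    funext w
    simp only [hh_def, norm_smul, Real.norm_eq_abs, abs_of_pos hε, mul_inv]
    ring
  have hh : Integrable h := by rw [hh_eq]; exact hR'.const_mul _
  have hg : Integrable (fun v : E3 => h (ε⁻¹ • v)) :=
    (integrable_comp_smul_iff volume h (inv_ne_zero hεne)).2 hh
  have hg_eq : (fun v : E3 => h (ε⁻¹ • v))
      = fun v : E3 => ‖v‖⁻¹ * |R (ε⁻¹ • v)| := by
    funext v
    simp only [hh_def, smul_inv_smul₀ hεne]
  constructor
  · have := (hg_eq ▸ hg).comp_sub_left y
    simpa using this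
  · have step1 : ∫ z : E3, ‖y - z‖⁻¹ * |R (ε⁻¹ • (y - z))|
        = ∫ v : E3, ‖v‖⁻¹ * |R (ε⁻¹ • v)| :=
      integral_sub_left_eq_self (fun v : E3 => ‖v‖⁻¹ * |R (ε⁻¹ • v)|) volume y
    have step2 : ∫ v : E3, h (ε⁻¹ • v) = (ε ^ Module.finrank ℝ E3) • ∫ w : E3, h w :=
      Measure.integral_comp_inv_smul_of_nonneg volume h hε.le
    have step3 : ∫ w : E3, h w = ε⁻¹ * ∫ w : E3, ‖w‖⁻¹ * |R w| := by
      rw [hh_eq]; exact integral_const_mul _ _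
    rw [step1, ← hg_eq, step2, step3, finrank_euclideanSpace_fin, smul_eq_mul,
      ← mul_assoc]
    congr 1
    field_simp

/-- Mean-term estimate in `d = 3`: with `|G(x,y)| ≤ C|x−y|⁻¹`, `u ∈ L^∞(D)`, `R ∈ L¹`
and `R(·)/|·| ∈ L¹`, the mean function
`m_ε(x) = ∫∫ G(x,y)G(y,z) R((y−z)/ε) u(z) dz dy` satisfies `‖m_ε‖²_{L²(D)} ≤ C ε⁴`. -/
theorem stmt17 (D : Set (EuclideanSpace ℝ (Fin 3)))
    (hDb : IsBounded D) (hDm : MeasurableSet D)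
    (G : EuclideanSpace ℝ (Fin 3) → EuclideanSpace ℝ (Fin 3) → ℝ)
    (hGmeas : Measurable (Function.uncurry G)) (C₀ : ℝ) (hC₀ : 0 < C₀)
    (hG : ∀ x y, x ≠ y → |G x y| ≤ C₀ * ‖x - y‖⁻¹)
    (u : EuclideanSpace ℝ (Fin 3) → ℝ) (humeas : Measurable u) (hu : ∀ x, |u x| ≤ C₀)
    (R : EuclideanSpace ℝ (Fin 3) → ℝ) (hRmeas : Measurable R)
    (hRint : Integrable R)
    (hRint' : Integrable (fun w : EuclideanSpace ℝ (Fin 3) => R w * ‖w‖⁻¹)) :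
    ∃ C : ℝ, ∀ ε ∈ Set.Ioc (0:ℝ) 1,
      (∫ x in D,
        (∫ y in D, ∫ z in D, G x y * G y z * R (ε⁻¹ • (y - z)) * u z) ^ 2)
        ≤ C * ε ^ 4 := by
  -- the integrable "Riesz times R" function
  have hR' : Integrable (fun w : E3 => ‖w‖⁻¹ * |R w|) := by
    have := hRint'.abs
    refine this.congr ?_
    filter_upwards with w
    rw [abs_mul, abs_inv, abs_norm, mul_comm]
  set I : ℝ := ∫ w : E3, ‖w‖⁻¹ * |R w| with hI_def
  have hI0 : 0 ≤ I :=
    integral_nonneg fun w => mul_nonneg (inv_nonneg.2 (norm_nonneg _)) (abs_nonneg _)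
  -- a ball containing D
  obtain ⟨r, hr0, hrD⟩ := hDb.subset_ball_lt 0 0
  set s : ℝ := 2 * r with hs_def
  set K : ℝ := ∫ w in Metric.ball (0:E3) s, ‖w‖⁻¹ with hK_def
  have hK0 : 0 ≤ K :=
    setIntegral_nonneg measurableSet_ball fun w _ => inv_nonneg.2 (norm_nonneg _)
  -- uniform bound on the Riesz potential over D
  have hunif : ∀ x ∈ D, IntegrableOn (fun y : E3 => ‖x - y‖⁻¹) D volume ∧
      (∫ y in D, ‖x - y‖⁻¹) ≤ K := by
    intro x hx
    have hDsub : D ⊆ Metric.ball x s := by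
      intro y hy
      have h1 : ‖y‖ < r := by simpa [Metric.mem_ball, dist_eq_norm] using hrD hy
      have h2 : ‖x‖ < r := by simpa [Metric.mem_ball, dist_eq_norm] using hrD hx
      have : ‖y - x‖ ≤ ‖y‖ + ‖x‖ := norm_sub_le _ _
      rw [Metric.mem_ball, dist_eq_norm]
      calc ‖y - x‖ ≤ ‖y‖ + ‖x‖ := this
        _ < r + r := by linarith
        _ = s := by rw [hs_def]; ring
    have hpre : (fun t : E3 => x - t) ⁻¹' (Metric.ball 0 s) = Metric.ball x s := by
      ext y
      simp [Metric.mem_ball, dist_eq_norm, norm_sub_rev x y]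
    -- integrability on the ball via translation
    have hind : Integrable
        (fun y : E3 => (Metric.ball (0:E3) s).indicator (fun w => ‖w‖⁻¹) (x - y)) := by
      have h0 : Integrable ((Metric.ball (0:E3) s).indicator (fun w => ‖w‖⁻¹)) := by
        rw [integrable_indicator_iff measurableSet_ball]
        exact riesz_integrableOn_ball s
      exact h0.comp_sub_left x
    have hind_eq : (fun y : E3 => (Metric.ball (0:E3) s).indicator (fun w => ‖w‖⁻¹) (x - y))
        = (Metric.ball x s).indicator (fun y => ‖x - y‖⁻¹) := by
      funext y
      by_cases hy : y ∈ Metric.ball x s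
      · have hy' : x - y ∈ Metric.ball (0:E3) s := by rw [← hpre] at hy; exact hy
        rw [indicator_of_mem hy', indicator_of_mem hy]
      · have hy' : x - y ∉ Metric.ball (0:E3) s := by rw [← hpre] at hy; exact hy
        rw [indicator_of_notMem hy', indicator_of_notMem hy]
    have hball : IntegrableOn (fun y : E3 => ‖x - y‖⁻¹) (Metric.ball x s) := by
      rw [← integrable_indicator_iff measurableSet_ball, ← hind_eq]
      exact hind
    refine ⟨hball.mono_set hDsub, ?_⟩
    have hmono : (∫ y in D, ‖x - y‖⁻¹) ≤ ∫ y in Metric.ball x s, ‖x - y‖⁻¹ := by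
      refine setIntegral_mono_set hball ?_ hDsub.eventuallyLE
      filter_upwards with y
      exact inv_nonneg.2 (norm_nonneg _)
    have hchange : (∫ y in Metric.ball x s, ‖x - y‖⁻¹) = K := by
      rw [hK_def]
      have := (Measure.measurePreserving_sub_left volume x).setIntegral_preimage_emb
        (MeasurableEquiv.subLeft x).measurableEmbedding
        (fun w : E3 => ‖w‖⁻¹) (Metric.ball 0 s)
      rw [hpre] at this
      exact this
    rw [← hchange]; exact hmono
  -- the constant
  refine ⟨(volume D).toReal * (C₀ ^ 3 * I * K) ^ 2, ?_⟩
  intro ε hε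
  obtain ⟨hε0, hε1⟩ := hε
  have hcov_int := fun y : E3 => (cov_lemma hR' hε0 y).1
  have hcov_eq := fun y : E3 => (cov_lemma hR' hε0 y).2
  set Q : ℝ := C₀ * C₀ * (ε ^ 2 * I) with hQ_def
  have hQ0 : 0 ≤ Q := by positivity
  set f : E3 → ℝ :=
    fun x => ∫ y in D, ∫ z in D, G x y * G y z * R (ε⁻¹ • (y - z)) * u z with hf_def
  -- pointwise bound |f x| ≤ C₀ * Q * K
  have hpt : ∀ x ∈ D, |f x| ≤ C₀ * Q * K := by
    intro x hx
    obtain ⟨hxint, hxbound⟩ := hunif x hx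
    -- bound on the inner z-integral, for every y
    have hS : ∀ y : E3, |∫ z in D, G y z * R (ε⁻¹ • (y - z)) * u z| ≤ Q := by
      intro y
      have h1 : |∫ z in D, G y z * R (ε⁻¹ • (y - z)) * u z|
          ≤ ∫ z in D, ‖G y z * R (ε⁻¹ • (y - z)) * u z‖ := by
        rw [← Real.norm_eq_abs]
        exact norm_integral_le_integral_norm _
      have h2 : (∫ z in D, ‖G y z * R (ε⁻¹ • (y - z)) * u z‖)
          ≤ ∫ z in D, (C₀ * C₀) * (‖y - z‖⁻¹ * |R (ε⁻¹ • (y - z))|) := by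
        refine integral_mono_of_nonneg (ae_of_all _ fun z => norm_nonneg _)
          (((hcov_int y).const_mul (C₀ * C₀)).integrableOn) ?_
        have hne : ∀ᵐ z ∂(volume.restrict D), z ≠ y := by
          refine ae_restrict_of_ae ?_
          have : volume ({y} : Set E3) = 0 := measure_singleton y
          rw [ae_iff]
          convert this using 2
          ext z; simp [eq_comm]
        filter_upwards [hne] with z hz
        have hGyz : |G y z| ≤ C₀ * ‖y - z‖⁻¹ := hG y z (Ne.symm hz)
        have huz : |u z| ≤ C₀ := hu z
        rw [Real.norm_eq_abs, abs_mul, abs_mul]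
        calc |G y z| * |R (ε⁻¹ • (y - z))| * |u z|
            ≤ (C₀ * ‖y - z‖⁻¹) * |R (ε⁻¹ • (y - z))| * C₀ := by
              gcongr
          _ = (C₀ * C₀) * (‖y - z‖⁻¹ * |R (ε⁻¹ • (y - z))|) := by ring
      have h3 : (∫ z in D, (C₀ * C₀) * (‖y - z‖⁻¹ * |R (ε⁻¹ • (y - z))|)) ≤ Q := by
        rw [integral_const_mul, hQ_def]
        have h4 : (∫ z in D, ‖y - z‖⁻¹ * |R (ε⁻¹ • (y - z))|)
            ≤ ∫ z : E3, ‖y - z‖⁻¹ * |R (ε⁻¹ • (y - z))| := by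
          refine setIntegral_le_integral (hcov_int y) ?_
          filter_upwards with z
          exact mul_nonneg (inv_nonneg.2 (norm_nonneg _)) (abs_nonneg _)
        rw [hcov_eq y] at h4
        have : 0 ≤ C₀ * C₀ := by positivity
        calc C₀ * C₀ * (∫ z in D, ‖y - z‖⁻¹ * |R (ε⁻¹ • (y - z))|)
            ≤ C₀ * C₀ * (ε ^ 2 * I) := by
              exact mul_le_mul_of_nonneg_left h4 this
          _ = C₀ * C₀ * (ε ^ 2 * I) := rfl
      exact h1.trans (h2.trans h3)
    -- now bound f x
    have hfy : ∀ y : E3, (∫ z in D, G x y * G y z * R (ε⁻¹ • (y - z)) * u z)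
        = G x y * ∫ z in D, G y z * R (ε⁻¹ • (y - z)) * u z := by
      intro y
      rw [← integral_const_mul]
      congr 1
      funext z
      ring
    have hbound1 : |f x| ≤ ∫ y in D,
        ‖∫ z in D, G x y * G y z * R (ε⁻¹ • (y - z)) * u z‖ := by
      rw [hf_def, ← Real.norm_eq_abs]
      exact norm_integral_le_integral_norm _
    have hbound2 : (∫ y in D, ‖∫ z in D, G x y * G y z * R (ε⁻¹ • (y - z)) * u z‖)
        ≤ ∫ y in D, (C₀ * Q) * ‖x - y‖⁻¹ := by
      refine integral_mono_of_nonneg (ae_of_all _ fun y => norm_nonneg _)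
        ((hxint.const_mul (C₀ * Q))) ?_
      have hne : ∀ᵐ y ∂(volume.restrict D), y ≠ x := by
        refine ae_restrict_of_ae ?_
        have : volume ({x} : Set E3) = 0 := measure_singleton x
        rw [ae_iff]
        convert this using 2
        ext y; simp
      filter_upwards [hne] with y hy
      rw [hfy y, Real.norm_eq_abs, abs_mul]
      have hGxy : |G x y| ≤ C₀ * ‖x - y‖⁻¹ := hG x y (Ne.symm hy)
      calc |G x y| * |∫ z in D, G y z * R (ε⁻¹ • (y - z)) * u z|
          ≤ (C₀ * ‖x - y‖⁻¹) * Q := by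
            refine mul_le_mul hGxy (hS y) (abs_nonneg _) ?_
            positivity
        _ = (C₀ * Q) * ‖x - y‖⁻¹ := by ring
    have hbound3 : (∫ y in D, (C₀ * Q) * ‖x - y‖⁻¹) ≤ C₀ * Q * K := by
      rw [integral_const_mul]
      exact mul_le_mul_of_nonneg_left hxbound (by positivity)
    exact hbound1.trans (hbound2.trans hbound3)
  -- conclude
  have hM : C₀ * Q * K = (C₀ ^ 3 * I * K) * ε ^ 2 := by rw [hQ_def]; ring
  set M : ℝ := (C₀ ^ 3 * I * K) * ε ^ 2 with hM_def
  have hM0 : 0 ≤ M := by positivity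
  by_cases hint : IntegrableOn (fun x => (f x) ^ 2) D volume
  · calc (∫ x in D, (f x) ^ 2) ≤ (∫ _ in D, M ^ 2) := by
          refine setIntegral_mono_on hint (integrableOn_const hDb.measure_lt_top.ne)
            hDm fun x hx => ?_
          have h := hpt x hx
          rw [hM] at h
          have h' := abs_le.1 h
          exact sq_le_sq' h'.1 h'.2
      _ = (volume D).toReal * M ^ 2 := by
        rw [setIntegral_const, smul_eq_mul, measureReal_def]
      _ = (volume D).toReal * (C₀ ^ 3 * I * K) ^ 2 * ε ^ 4 := by
        rw [hM_def]; ring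
  · rw [hf_def] at hint
    rw [integral_undef hint]
    positivity
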